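/- Let I = ℝ or I = (0,∞), let F : ℝ² → ℝ be C², positively homogeneous of degree p > 2, with F > 0 away from the origin. Let (u,v) be a bounded C² solution of −u'' = ∂_u F(u,v), −v'' = ∂_v F(u,v) on I with (u,v) not identically (0,0). Then there exist ε, δ > 0 and a sequence (r_n) in I with r_n → ∞ such that ∫_{r_n−ε}^{r_n+ε} (|u|^p + |v|^p) dt ≥ δ for every n. -/

import Mathlib

open Real

lemma euler_id (p : ℝ) (F : ℝ × ℝ → ℝ) (hF : Differentiable ℝ F)
    (hhom : ∀ t : ℝ, 0 < t → ∀ z : ℝ × ℝ, F (t • z) = t ^ p * F z)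
    (z : ℝ × ℝ) : fderiv ℝ F z z = p * F z := by
  have hz : HasDerivAt (fun t : ℝ => t • z) z 1 := by
    simpa using (hasDerivAt_id (1:ℝ)).smul_const z
  have h1 : HasDerivAt (fun t : ℝ => F (t • z)) (fderiv ℝ F z z) 1 := by
    have := ((hF (((1:ℝ) • z))).hasFDerivAt).comp_hasDerivAt 1 hz
    rw [one_smul] at this; exact this
  have h2 : HasDerivAt (fun t : ℝ => t ^ p * F z) (p * F z) 1 := by
    have := (Real.hasDerivAt_rpow_const (x := (1:ℝ)) (p := p) (Or.inl one_ne_zero)).mul_const (F z)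
    simpa using this
  have heq : (fun t : ℝ => F (t • z)) =ᶠ[nhds 1] (fun t : ℝ => t ^ p * F z) := by
    filter_upwards [eventually_gt_nhds (by norm_num : (0:ℝ) < 1)] with t ht
    exact hhom t ht z
  exact ((h2.congr_of_eventuallyEq heq).unique h1).symm

lemma growth_bound (p : ℝ) (hp : 0 < p) (F : ℝ × ℝ → ℝ) (hF : Continuous F)
    (hhom : ∀ t : ℝ, 0 < t → ∀ z : ℝ × ℝ, F (t • z) = t ^ p * F z)
    (hF0 : F 0 = 0) :
    ∃ Cf > (0:ℝ), ∀ z : ℝ × ℝ, F z ≤ Cf * (|z.1| ^ p + |z.2| ^ p) := by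
  obtain ⟨w, -, hw⟩ := (isCompact_closedBall (0:ℝ×ℝ) 1).exists_isMaxOn
    (Metric.nonempty_closedBall.2 zero_le_one) hF.continuousOn
  refine ⟨max (F w) 1, lt_of_lt_of_le one_pos (le_max_right _ _), fun z => ?_⟩
  have hrpos : ∀ x : ℝ, 0 ≤ x → 0 ≤ x ^ p := fun x hx => Real.rpow_nonneg hx p
  by_cases hz : z = 0
  · subst hz
    simp [hF0, Real.zero_rpow hp.ne']
  · set n := ‖z‖ with hn
    have hn0 : 0 < n := norm_pos_iff.2 hz
    have hmem : n⁻¹ • z ∈ Metric.closedBall (0:ℝ×ℝ) 1 := by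
      simp [norm_smul, abs_of_pos (inv_pos.2 hn0), abs_of_pos hn0, inv_mul_cancel₀ hn0.ne']
      exact (inv_mul_cancel₀ hn0.ne').le
    have hzeq : z = n • (n⁻¹ • z) := by
      rw [smul_smul, mul_inv_cancel₀ hn0.ne', one_smul]
    have h1 : F z ≤ n ^ p * max (F w) 1 := by
      calc F z = n ^ p * F (n⁻¹ • z) := by rw [hzeq, hhom n hn0]; rw [← hzeq]
        _ ≤ n ^ p * max (F w) 1 :=
          mul_le_mul_of_nonneg_left (le_trans (hw hmem) (le_max_left _ _))
            (Real.rpow_pos_of_pos hn0 p).le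
    have h2 : n ^ p ≤ |z.1| ^ p + |z.2| ^ p := by
      have hne : n = max |z.1| |z.2| := by
        rw [hn, Prod.norm_def]; simp [Real.norm_eq_abs]
      rw [hne]
      rcases max_cases |z.1| |z.2| with ⟨h, -⟩ | ⟨h, -⟩ <;> rw [h]
      · nlinarith [hrpos |z.2| (abs_nonneg _)]
      · nlinarith [hrpos |z.1| (abs_nonneg _)]
    calc F z ≤ n ^ p * max (F w) 1 := h1
      _ ≤ (|z.1| ^ p + |z.2| ^ p) * max (F w) 1 :=
          mul_le_mul_of_nonneg_right h2 (le_trans zero_le_one (le_max_right _ _))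
      _ = _ := mul_comm _ _

theorem stmt7 (I : Set ℝ) (hI : I = Set.univ ∨ I = Set.Ioi 0)
    (p : ℝ) (hp : 2 < p) (F : ℝ × ℝ → ℝ) (hF : ContDiff ℝ 2 F)
    (hhom : ∀ t : ℝ, 0 < t → ∀ z : ℝ × ℝ, F (t • z) = t ^ p * F z)
    (hpos : ∀ z : ℝ × ℝ, z ≠ 0 → 0 < F z)
    (u v u' v' u'' v'' : ℝ → ℝ)
    (hbd : ∃ C, ∀ t ∈ I, |u t| ≤ C ∧ |v t| ≤ C)
    (hu : ∀ t ∈ I, HasDerivAt u (u' t) t) (hu' : ∀ t ∈ I, HasDerivAt u' (u'' t) t)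
    (hv : ∀ t ∈ I, HasDerivAt v (v' t) t) (hv' : ∀ t ∈ I, HasDerivAt v' (v'' t) t)
    (hequ : ∀ t ∈ I, -u'' t = fderiv ℝ F (u t, v t) (1, 0))
    (heqv : ∀ t ∈ I, -v'' t = fderiv ℝ F (u t, v t) (0, 1))
    (hnt : ∃ t ∈ I, (u t, v t) ≠ (0, 0)) :
    ∃ ε > (0:ℝ), ∃ δ > (0:ℝ), ∃ r : ℕ → ℝ,
      (∀ n, r n ∈ I) ∧ (∀ n, Set.Icc (r n - ε) (r n + ε) ⊆ I) ∧
      Filter.Tendsto r Filter.atTop Filter.atTop ∧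
      ∀ n, δ ≤ ∫ t in Set.Icc (r n - ε) (r n + ε), (|u t| ^ p + |v t| ^ p) := by
  obtain ⟨C, hC⟩ := hbd
  obtain ⟨t0, ht0I, ht0⟩ := hnt
  have hp0 : (0:ℝ) < p := by linarith
  have hIcc : ∀ a b : ℝ, a ∈ I → Set.Icc a b ⊆ I := by
    rcases hI with h | h <;> subst h
    · intro a b _ x _; trivial
    · intro a b ha x hx; exact lt_of_lt_of_le ha hx.1
  have hone : (1:ℝ) ∈ I := by rcases hI with h | h <;> simp [h]
  have hFd : Differentiable ℝ F := hF.differentiable (by norm_num)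
  have hF0 : F 0 = 0 := by
    have h := hhom 2 (by norm_num) 0
    rw [smul_zero] at h
    have h2 : (1:ℝ) < 2 ^ p :=
      (Real.one_lt_rpow_iff_of_pos (by norm_num)).2 (Or.inl ⟨by norm_num, hp0⟩)
    have h3 : F 0 * ((2:ℝ) ^ p - 1) = 0 := by rw [mul_sub, mul_one, mul_comm]; linarith
    rcases mul_eq_zero.1 h3 with h4 | h4
    · exact h4
    · linarith
  have hFnn : ∀ z : ℝ × ℝ, 0 ≤ F z := by
    intro z
    by_cases h : z = 0
    · simp [h, hF0]
    · exact (hpos z h).le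
  -- chain rule for F along the solution
  have hFz : ∀ t ∈ I, HasDerivAt (fun s => F (u s, v s))
      (fderiv ℝ F (u t, v t) (u' t, v' t)) t := by
    intro t ht
    exact (hFd _).hasFDerivAt.comp_hasDerivAt t ((hu t ht).prodMk (hv t ht))
  -- linearity of fderiv
  have hlin : ∀ (z : ℝ × ℝ) (a b : ℝ), fderiv ℝ F z (a, b) =
      a * fderiv ℝ F z (1, 0) + b * fderiv ℝ F z (0, 1) := by
    intro z a b
    have hab : ((a, b) : ℝ × ℝ) = a • ((1:ℝ), (0:ℝ)) + b • ((0:ℝ), (1:ℝ)) := by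
      simp [Prod.ext_iff]
    rw [hab, map_add, map_smul, map_smul]
    simp [smul_eq_mul]
  -- energy conservation
  have hE : ∀ t ∈ I, HasDerivAt (fun s => u' s ^ 2 / 2 + v' s ^ 2 / 2 + F (u s, v s)) 0 t := by
    intro t ht
    have h1 : HasDerivAt (fun s => u' s ^ 2 / 2) (u' t * u'' t) t := by
      have := ((hu' t ht).pow 2).div_const 2
      refine this.congr_deriv (Eq.symm ?_); push_cast; ring
    have h2 : HasDerivAt (fun s => v' s ^ 2 / 2) (v' t * v'' t) t := by
      have := ((hv' t ht).pow 2).div_const 2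
      refine this.congr_deriv (Eq.symm ?_); push_cast; ring
    have h3 := (h1.add h2).add (hFz t ht)
    refine h3.congr_deriv (Eq.symm ?_)
    rw [hlin, ← hequ t ht, ← heqv t ht]
    ring
  have hEc : ∀ a ∈ I, ∀ b ∈ I,
      u' a ^ 2 / 2 + v' a ^ 2 / 2 + F (u a, v a) = u' b ^ 2 / 2 + v' b ^ 2 / 2 + F (u b, v b) := by
    have key : ∀ a ∈ I, ∀ b ∈ I, a ≤ b →
        u' b ^ 2 / 2 + v' b ^ 2 / 2 + F (u b, v b)
          = u' a ^ 2 / 2 + v' a ^ 2 / 2 + F (u a, v a) := by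
      intro a ha b hb hab
      have hsub := hIcc a b ha
      exact constant_of_has_deriv_right_zero
        (fun x hx => (hE x (hsub hx)).continuousAt.continuousWithinAt)
        (fun x hx => (hE x (hsub (Set.Ico_subset_Icc_self hx))).hasDerivWithinAt)
        b (Set.right_mem_Icc.2 hab)
    intro a ha b hb
    rcases le_total a b with h | h
    · exact (key a ha b hb h).symm
    · exact key b hb a ha h
  set e : ℝ := u' t0 ^ 2 / 2 + v' t0 ^ 2 / 2 + F (u t0, v t0) with hedef
  have hz0 : ((u t0, v t0) : ℝ × ℝ) ≠ 0 := ht0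
  have he : 0 < e := by
    rw [hedef]
    nlinarith [hpos _ hz0, sq_nonneg (u' t0), sq_nonneg (v' t0)]
  clear_value e
  have hEe : ∀ t ∈ I, u' t ^ 2 / 2 + v' t ^ 2 / 2 + F (u t, v t) = e :=
    fun t ht => (hEc t ht t0 ht0I).trans hedef.symm
  set s : ℝ := Real.sqrt (2 * e) with hsdef
  have hs0 : 0 ≤ s := by rw [hsdef]; exact Real.sqrt_nonneg _
  have hub : ∀ t ∈ I, |u' t| ≤ s ∧ |v' t| ≤ s := by
    intro t ht
    have hEt := hEe t ht
    have hFt := hFnn (u t, v t)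
    rw [hsdef]
    constructor
    · rw [← Real.sqrt_sq_eq_abs]
      exact Real.sqrt_le_sqrt (by nlinarith [sq_nonneg (v' t)])
    · rw [← Real.sqrt_sq_eq_abs]
      exact Real.sqrt_le_sqrt (by nlinarith [sq_nonneg (u' t)])
  clear_value s
  have hC0 : 0 ≤ C := le_trans (abs_nonneg _) (hC 1 hone).1
  have hGbd : ∀ t ∈ I, |u t * u' t + v t * v' t| ≤ 2 * C * s := by
    intro t ht
    obtain ⟨h1, h2⟩ := hC t ht
    obtain ⟨h3, h4⟩ := hub t ht
    calc |u t * u' t + v t * v' t| ≤ |u t * u' t| + |v t * v' t| := abs_add_le _ _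
      _ = |u t| * |u' t| + |v t| * |v' t| := by rw [abs_mul, abs_mul]
      _ ≤ C * s + C * s := add_le_add
          (mul_le_mul h1 h3 (abs_nonneg _) hC0) (mul_le_mul h2 h4 (abs_nonneg _) hC0)
      _ = 2 * C * s := by ring
  -- derivative of u u' + v v'
  have hG : ∀ t ∈ I, HasDerivAt (fun s => u s * u' s + v s * v' s)
      (2 * e - (p + 2) * F (u t, v t)) t := by
    intro t ht
    have h1 := ((hu t ht).mul (hu' t ht)).add ((hv t ht).mul (hv' t ht))
    refine h1.congr_deriv (Eq.symm ?_)
    have heu := euler_id p F hFd hhom (u t, v t)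
    rw [hlin, ← hequ t ht, ← heqv t ht] at heu
    have hEt := hEe t ht
    linear_combination heu - 2 * hEt
  -- FTC / Pohozaev bound
  obtain ⟨Cf, hCf0, hCf⟩ := growth_bound p hp0 F hFd.continuous hhom hF0
  set ε : ℝ := (2 * C * s + e) / (2 * e) with hεdef
  have hε : 0 < ε := by
    rw [hεdef]
    apply div_pos
    · nlinarith [mul_nonneg hC0 hs0]
    · linarith
  clear_value ε
  set δ : ℝ := 2 * e / ((p + 2) * Cf) with hδdef
  have hδ : 0 < δ := by
    rw [hδdef]; exact div_pos (by linarith) (mul_pos (by linarith) hCf0)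
  clear_value δ
  have hmain : ∀ a b : ℝ, a ≤ b → b - a = 2 * ε → Set.Icc a b ⊆ I →
      δ ≤ ∫ t in Set.Icc a b, (|u t| ^ p + |v t| ^ p) := by
    intro a b hab hlen hsub
    have hcF : ContinuousOn (fun t => F (u t, v t)) (Set.Icc a b) := by
      intro x hx
      exact (ContinuousAt.comp hFd.continuous.continuousAt
        ((hu x (hsub hx)).continuousAt.prodMk (hv x (hsub hx)).continuousAt)).continuousWithinAt
    have hcFu : ContinuousOn (fun t => F (u t, v t)) (Set.uIcc a b) := by
      rwa [Set.uIcc_of_le hab]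
    have hcP : ContinuousOn (fun t => |u t| ^ p + |v t| ^ p) (Set.Icc a b) := by
      intro x hx
      have h1 : ContinuousAt (fun t => |u t| ^ p) x :=
        ContinuousAt.comp (Real.continuousAt_rpow_const _ p (Or.inr hp0.le))
          (continuous_abs.continuousAt.comp (hu x (hsub hx)).continuousAt)
      have h2 : ContinuousAt (fun t => |v t| ^ p) x :=
        ContinuousAt.comp (Real.continuousAt_rpow_const _ p (Or.inr hp0.le))
          (continuous_abs.continuousAt.comp (hv x (hsub hx)).continuousAt)
      exact (h1.add h2).continuousWithinAt
    have hcPu : ContinuousOn (fun t => |u t| ^ p + |v t| ^ p) (Set.uIcc a b) := by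
      rwa [Set.uIcc_of_le hab]
    have hFTC := intervalIntegral.integral_eq_sub_of_hasDerivAt
      (f := fun t => u t * u' t + v t * v' t)
      (f' := fun t => 2 * e - (p + 2) * F (u t, v t))
      (fun x hx => hG x (hsub (by rwa [Set.uIcc_of_le hab] at hx)))
      ((continuousOn_const.sub (continuousOn_const.mul hcFu)).intervalIntegrable)
    have hsplit : (∫ t in a..b, (2 * e - (p + 2) * F (u t, v t)))
        = 2 * e * (b - a) - (p + 2) * ∫ t in a..b, F (u t, v t) := by
      rw [intervalIntegral.integral_sub intervalIntegrable_const
        (ContinuousOn.intervalIntegrable (u := fun t => (p + 2) * F (u t, v t)) (continuousOn_const.mul hcFu)),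
        intervalIntegral.integral_const, intervalIntegral.integral_const_mul]
      simp [smul_eq_mul]; ring
    have hGa := hGbd a (hsub (Set.left_mem_Icc.2 hab))
    have hGb := hGbd b (hsub (Set.right_mem_Icc.2 hab))
    have hlen2 : 2 * e * (b - a) = 2 * (2 * C * s) + 2 * e := by
      rw [hlen, hεdef]; field_simp
    have hFTC2 : (∫ t in a..b, (2 * e - (p + 2) * F (u t, v t)))
        = (u b * u' b + v b * v' b) - (u a * u' a + v a * v' a) := hFTC
    have h1 : 2 * e ≤ (p + 2) * ∫ t in a..b, F (u t, v t) := by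
      have ha1 := abs_le.1 hGa
      have hb1 := abs_le.1 hGb
      rw [hsplit] at hFTC2
      linarith [ha1.1, ha1.2, hb1.1, hb1.2]
    have hcomp : (∫ t in a..b, F (u t, v t))
        ≤ Cf * ∫ t in a..b, (|u t| ^ p + |v t| ^ p) := by
      rw [← intervalIntegral.integral_const_mul]
      exact intervalIntegral.integral_mono_on hab hcFu.intervalIntegrable
        ((continuousOn_const.mul hcPu).intervalIntegrable)
        (fun t _ => hCf (u t, v t))
    have heq : (∫ t in Set.Icc a b, (|u t| ^ p + |v t| ^ p))
        = ∫ t in a..b, (|u t| ^ p + |v t| ^ p) := by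
      rw [MeasureTheory.integral_Icc_eq_integral_Ioc, intervalIntegral.integral_of_le hab]
    rw [heq, hδdef, div_le_iff₀ (mul_pos (by linarith) hCf0)]
    nlinarith [h1, hcomp, mul_le_mul_of_nonneg_left hcomp (by linarith : (0:ℝ) ≤ p + 2)]
  refine ⟨ε, hε, δ, hδ, fun n => (n : ℝ) + ε + 1, ?_, ?_, ?_, ?_⟩
  · intro n
    rcases hI with h | h <;> subst h
    · trivial
    · have : (0:ℝ) < (n : ℝ) + ε + 1 := by positivity
      exact this
  · intro n x hx
    rcases hI with h | h <;> subst h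
    · trivial
    · have : (n : ℝ) + ε + 1 - ε ≤ x := hx.1
      have : (0:ℝ) < x := by
        have hn : (0:ℝ) ≤ (n : ℝ) := Nat.cast_nonneg n
        linarith
      exact this
  · have h1 : Filter.Tendsto (fun n : ℕ => (n : ℝ)) Filter.atTop Filter.atTop :=
      tendsto_natCast_atTop_atTop
    simpa [add_assoc] using Filter.tendsto_atTop_add_const_right Filter.atTop (ε + 1) h1
  · intro n
    apply hmain _ _ (by linarith) (by ring)
    apply hIcc
    rcases hI with h | h <;> subst h
    · trivial
    · have hn : (0:ℝ) ≤ (n : ℝ) := Nat.cast_nonneg n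
      have : (0:ℝ) < (n : ℝ) + ε + 1 - ε := by linarith
      exact this
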